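/- Drift positivity: let r* ∈ A be lex-optimal, let r ∈ ℝ^N with r ≥ 0, and let J ∈ A_0 satisfy Σ_{i ∈ ∪_{k=1}^{n} L_k(r)} J_i = f(∪_{k=1}^{n} L_k(r)) for every n = 1,…,K(r), where L_k(r) are the level sets of the ratios r_i/D_i. Then Σ_{i∈N} (1/D_i)(r*_i − r_i)(J_i − r_i) ≥ Σ_{i∈N} (1/D_i)(r*_i − r_i)²; in particular, for every ε > 0 and every such pair (r, J) with ‖r − r*‖ ≥ ε, the left-hand side is at least ε² · min_{i∈N}(1/D_i) > 0. -/

import Mathlib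

open Finset
open scoped Classical

noncomputable section

namespace SharingEcon

variable {V : Type*} [Fintype V] [DecidableEq V]

/-- The set of neighbors of a set of nodes: `N_S = ⋃ i ∈ S, N_i`. -/
def nbrs (G : SimpleGraph V) [DecidableRel G.Adj] (S : Finset V) : Finset V :=
  S.biUnion fun i => G.neighborFinset i

/-- The set function `f(S) = ∑_{j ∈ N_S} D_j`. -/
def fS (G : SimpleGraph V) [DecidableRel G.Adj] (D : V → ℝ) (S : Finset V) : ℝ :=
  ∑ j ∈ nbrs G S, D j

/-- The polymatroid polyhedron `A` of a set function `f`. -/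
def polyA (f : Finset V → ℝ) : Set (V → ℝ) :=
  {r | (∀ i, 0 ≤ r i) ∧ ∀ S : Finset V, ∑ i ∈ S, r i ≤ f S}

/-- The base `A₀` of the polymatroid. -/
def polyBase (f : Finset V → ℝ) : Set (V → ℝ) :=
  {r | r ∈ polyA f ∧ ∑ i, r i = f Finset.univ}

/-- The coordinates of a vector sorted in nondecreasing order. -/
def sortedVec (x : V → ℝ) : List ℝ :=
  (Finset.univ.val.map x).sort (· ≤ ·)

/-- `x` is lexicographically at least `y` (comparing sorted coordinate vectors). -/
def lexGE (x y : V → ℝ) : Prop :=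
  sortedVec x = sortedVec y ∨
    ∃ k : ℕ, (∀ j < k, (sortedVec x).getD j 0 = (sortedVec y).getD j 0) ∧
      (sortedVec y).getD k 0 < (sortedVec x).getD k 0

/-- `r` is lexicographically optimal in `A` for the sharing-ratio vectors `(r i / D i)`. -/
def LexOptimal (A : Set (V → ℝ)) (D : V → ℝ) (r : V → ℝ) : Prop :=
  r ∈ A ∧ ∀ r' ∈ A, lexGE (fun i => r i / D i) (fun i => r' i / D i)

/-- The sharing ratio of node `i`. -/
def ratio (D r : V → ℝ) (i : V) : ℝ := r i / D i

/-- The distinct values of the sharing ratios, sorted increasingly. -/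
def vals (D r : V → ℝ) : List ℝ :=
  (Finset.univ.image (ratio D r)).sort (· ≤ ·)

/-- The number `K(r)` of distinct sharing-ratio values. -/
def numLevels (D r : V → ℝ) : ℕ := (vals D r).length

/-- The `k`-th smallest distinct ratio value `v_k(r)` (1-indexed). -/
def v (D r : V → ℝ) (k : ℕ) : ℝ := (vals D r).getD (k - 1) 0

/-- The `k`-th level set `L_k(r)` (1-indexed). -/
def level (D r : V → ℝ) (k : ℕ) : Finset V :=
  Finset.univ.filter fun i => ratio D r i = v D r k

end SharingEcon
namespace SharingEcon

set_option linter.unusedSectionVars false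
set_option maxHeartbeats 1000000

section Aux

variable {V : Type*} [Fintype V] [DecidableEq V]

lemma sorted_getD_le_iff : ∀ (l : List ℝ), l.Pairwise (· ≤ ·) → ∀ j, j < l.length → ∀ c : ℝ,
    (l.getD j 0 ≤ c ↔ j < l.countP (fun a => decide (a ≤ c))) := by
  intro l
  induction l with
  | nil => intro _ j hj; simp at hj
  | cons a l ih =>
    intro hs j hj c
    rcases List.pairwise_cons.mp hs with ⟨ha, hl⟩
    cases j with
    | zero =>
      simp only [List.getD_cons_zero, List.countP_cons]
      constructor
      · intro h; by_cases hac : a ≤ c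
        · simp [hac]
        · exact absurd h hac
      · intro h
        by_contra hac
        have h0 : List.countP (fun a => decide (a ≤ c)) l = 0 := by
          rw [List.countP_eq_zero]
          intro b hb
          simp only [decide_eq_true_eq]
          intro hbc
          exact hac (le_trans (ha b hb) hbc)
        simp [h0, hac] at h
    | succ j =>
      simp only [List.getD_cons_succ, List.countP_cons]
      rw [ih hl j (by simpa using hj) c]
      by_cases hac : a ≤ c
      · simp [hac]
      · have h0 : List.countP (fun a => decide (a ≤ c)) l = 0 := by
          rw [List.countP_eq_zero]
          intro b hb
          simp only [decide_eq_true_eq]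
          intro hbc
          exact hac (le_trans (ha b hb) hbc)
        simp [h0, hac]

lemma sortedVec_sorted (x : V → ℝ) : (sortedVec x).Pairwise (· ≤ ·) :=
  Multiset.pairwise_sort _ _

lemma sortedVec_length (x : V → ℝ) : (sortedVec x).length = Fintype.card V := by
  simp [sortedVec, Multiset.length_sort]

lemma sortedVec_countP (x : V → ℝ) (c : ℝ) :
    (sortedVec x).countP (fun a => decide (a ≤ c)) = (univ.filter (fun i => x i ≤ c)).card := by
  have h1 : Multiset.countP (fun a => a ≤ c) ((univ.val.map x) : Multiset ℝ)
      = (sortedVec x).countP (fun a => decide (a ≤ c)) := by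
    conv_lhs => rw [← Multiset.sort_eq (univ.val.map x) (· ≤ ·)]
    exact Multiset.coe_countP _ _
  rw [← h1, Multiset.countP_map]
  rfl

lemma notLexGE_of_counts (x y : V → ℝ) (c₀ : ℝ)
    (heq : ∀ c < c₀, (univ.filter (fun i => y i ≤ c)).card = (univ.filter (fun i => x i ≤ c)).card)
    (hlt : (univ.filter (fun i => y i ≤ c₀)).card < (univ.filter (fun i => x i ≤ c₀)).card) :
    ¬ lexGE x y := by
  set s := sortedVec x with hs
  set t := sortedVec y with ht
  set m := (univ.filter (fun i => y i ≤ c₀)).card with hm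
  have hsl : s.length = Fintype.card V := sortedVec_length x
  have htl : t.length = Fintype.card V := sortedVec_length y
  have hmn : m < Fintype.card V := by
    calc m < (univ.filter (fun i => x i ≤ c₀)).card := hlt
    _ ≤ univ.card := card_filter_le _ _
    _ = Fintype.card V := rfl
  have hcharx : ∀ j, j < s.length → ∀ c : ℝ,
      (s.getD j 0 ≤ c ↔ j < (univ.filter (fun i => x i ≤ c)).card) := by
    intro j hj c
    rw [← sortedVec_countP x c]
    exact sorted_getD_le_iff s (sortedVec_sorted x) j hj c
  have hchary : ∀ j, j < t.length → ∀ c : ℝ,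
      (t.getD j 0 ≤ c ↔ j < (univ.filter (fun i => y i ≤ c)).card) := by
    intro j hj c
    rw [← sortedVec_countP y c]
    exact sorted_getD_le_iff t (sortedVec_sorted y) j hj c
  have hsm : s.getD m 0 ≤ c₀ := (hcharx m (by omega) c₀).2 hlt
  have htm : c₀ < t.getD m 0 := by
    by_contra h
    push_neg at h
    have := (hchary m (by omega) c₀).1 h
    omega
  have hpre : ∀ j < m, s.getD j 0 = t.getD j 0 := by
    intro j hj
    have hjn : j < Fintype.card V := by omega
    have hsj : s.getD j 0 ≤ c₀ := (hcharx j (by omega) c₀).2 (by omega)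
    have htj : t.getD j 0 ≤ c₀ := (hchary j (by omega) c₀).2 (by omega)
    rcases lt_trichotomy (s.getD j 0) (t.getD j 0) with h | h | h
    · exfalso
      set c := s.getD j 0 with hc
      have hcc : c < c₀ := lt_of_lt_of_le h htj
      have h1 : j < (univ.filter (fun i => x i ≤ c)).card := (hcharx j (by omega) c).1 le_rfl
      have h2 : ¬ j < (univ.filter (fun i => y i ≤ c)).card := by
        intro hcon
        have := (hchary j (by omega) c).2 hcon
        linarith
      rw [heq c hcc] at h2
      omega
    · exact h
    · exfalso
      set c := t.getD j 0 with hc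
      have hcc : c < c₀ := lt_of_lt_of_le h hsj
      have h1 : j < (univ.filter (fun i => y i ≤ c)).card := (hchary j (by omega) c).1 le_rfl
      have h2 : ¬ j < (univ.filter (fun i => x i ≤ c)).card := by
        intro hcon
        have := (hcharx j (by omega) c).2 hcon
        linarith
      rw [heq c hcc] at h1
      omega
  rintro (h | ⟨k, hk, hklt⟩)
  · rw [← hs, ← ht] at h
    rw [h] at hsm
    linarith
  · rw [← hs, ← ht] at hk hklt
    rcases lt_trichotomy k m with h | h | h
    · have := hpre k h
      linarith
    · subst h; linarith
    · have := hk m h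
      linarith


lemma abel_aux : ∀ (s : Finset V) (w d : V → ℝ),
    (∀ i ∈ s, w i ≤ 0) →
    (∀ c : ℝ, ∑ i ∈ s.filter (fun i => w i ≤ c), d i ≤ 0) →
    0 ≤ ∑ i ∈ s, w i * d i := by
  intro s
  induction s using Finset.strongInduction with
  | _ s ih =>
    intro w d hw h
    rcases s.eq_empty_or_nonempty with rfl | hne
    · simp
    have himg : (s.image w).Nonempty := hne.image w
    set m := (s.image w).max' himg with hmdef
    obtain ⟨i₀, hi₀s, hi₀⟩ := mem_image.mp ((s.image w).max'_mem himg)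
    have hmax : ∀ i ∈ s, w i ≤ m := fun i hi => le_max' _ _ (mem_image_of_mem w hi)
    have hm0 : m ≤ 0 := by rw [hmdef, ← hi₀]; exact hw i₀ hi₀s
    set t := s.filter (fun i => w i < m) with htdef
    have hts : t ⊂ s := by
      refine Finset.ssubset_iff_of_subset (filter_subset _ _) |>.2 ⟨i₀, hi₀s, ?_⟩
      simp [htdef, hi₀]
      exact fun _ => ⟨i₀, hi₀s, hi₀.symm.le⟩
    have hsd : ∑ i ∈ s, d i ≤ 0 := by
      have := h m
      rwa [filter_true_of_mem hmax] at this
    -- split sum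
    have hsplit : ∑ i ∈ s, w i * d i
        = ∑ i ∈ t, w i * d i + ∑ i ∈ s.filter (fun i => ¬ w i < m), w i * d i := by
      rw [sum_filter_add_sum_filter_not]
    have htop : ∑ i ∈ s.filter (fun i => ¬ w i < m), w i * d i
        = m * ∑ i ∈ s.filter (fun i => ¬ w i < m), d i := by
      rw [mul_sum]
      refine sum_congr rfl fun i hi => ?_
      rcases mem_filter.mp hi with ⟨his, hnl⟩
      have : w i = m := le_antisymm (hmax i his) (not_lt.mp hnl)
      rw [this]
    have htopd : ∑ i ∈ s.filter (fun i => ¬ w i < m), d i = ∑ i ∈ s, d i - ∑ i ∈ t, d i := by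
      have := sum_filter_add_sum_filter_not s (fun i => w i < m) d
      rw [← htdef] at this
      linarith
    -- IH on t with weight (w - m)
    have hIH : 0 ≤ ∑ i ∈ t, (w i - m) * d i := by
      refine ih t hts (fun i => w i - m) d (fun i hi => ?_) ?_
      · have := (mem_filter.mp hi).2
        linarith
      · intro c
        by_cases hc : c < 0
        · have hfeq : t.filter (fun i => w i - m ≤ c) = s.filter (fun i => w i ≤ c + m) := by
            ext i
            simp only [htdef, mem_filter, and_assoc]
            constructor
            · rintro ⟨his, _, h2⟩; exact ⟨his, by linarith⟩
            · rintro ⟨his, h2⟩; exact ⟨his, by linarith, by linarith⟩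
          rw [hfeq]; exact h (c + m)
        · push_neg at hc
          have hfeq : t.filter (fun i => w i - m ≤ c) = t := by
            refine filter_true_of_mem fun i hi => ?_
            have := (mem_filter.mp hi).2
            linarith
          rw [hfeq]
          rcases t.eq_empty_or_nonempty with hte | htne
          · simp [hte]
          · have himg' : (t.image w).Nonempty := htne.image w
            set m' := (t.image w).max' himg' with hm'def
            obtain ⟨i₁, hi₁t, hi₁⟩ := mem_image.mp ((t.image w).max'_mem himg')
            have hm'm : m' < m := by rw [hm'def, ← hi₁]; exact (mem_filter.mp hi₁t).2
            have hfeq2 : t = s.filter (fun i => w i ≤ m') := by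
              ext i
              simp only [htdef, mem_filter]
              constructor
              · rintro ⟨his, hlt⟩
                exact ⟨his, le_max' _ _ (mem_image_of_mem w (mem_filter.mpr ⟨his, hlt⟩))⟩
              · rintro ⟨his, hle⟩
                exact ⟨his, by linarith⟩
            rw [hfeq2]; exact h m'
    have hsub : ∑ i ∈ t, (w i - m) * d i = ∑ i ∈ t, w i * d i - m * ∑ i ∈ t, d i := by
      rw [mul_sum, ← sum_sub_distrib]
      refine sum_congr rfl fun i hi => by ring
    have hB : 0 ≤ m * ∑ i ∈ s, d i := by nlinarith
    rw [hsplit, htop, htopd]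
    rw [hsub] at hIH
    linarith

lemma abel (w d : V → ℝ)
    (h : ∀ c : ℝ, ∑ i ∈ univ.filter (fun i => w i ≤ c), d i ≤ 0)
    (htot : ∑ i, d i = 0) :
    0 ≤ ∑ i, w i * d i := by
  rcases isEmpty_or_nonempty V with hV | hV
  · simp
  have himg : ((univ : Finset V).image w).Nonempty := univ_nonempty.image w
  set m := ((univ : Finset V).image w).max' himg with hmdef
  have hmax : ∀ i : V, w i ≤ m := fun i => le_max' _ _ (mem_image_of_mem w (mem_univ i))
  have h' : 0 ≤ ∑ i, (w i - m) * d i := by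
    refine abel_aux univ (fun i => w i - m) d (fun i _ => by linarith [hmax i]) ?_
    intro c
    have hfeq : univ.filter (fun i => w i - m ≤ c) = univ.filter (fun i => w i ≤ c + m) := by
      ext i; simp only [mem_filter]; constructor
      · rintro ⟨_, h2⟩; exact ⟨mem_univ i, by linarith⟩
      · rintro ⟨_, h2⟩; exact ⟨mem_univ i, by linarith⟩
    rw [hfeq]; exact h (c + m)
  have : ∑ i, (w i - m) * d i = ∑ i, w i * d i - m * ∑ i, d i := by
    rw [mul_sum, ← sum_sub_distrib]
    exact sum_congr rfl fun i _ => by ring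
  rw [this, htot] at h'
  linarith


end Aux

section Poly

variable {V : Type*} [Fintype V] [DecidableEq V]
variable (G : SimpleGraph V) [DecidableRel G.Adj] (D : V → ℝ)

lemma fS_empty : fS G D ∅ = 0 := by
  simp [fS, nbrs]

lemma fS_submodular (hD : ∀ i, 0 ≤ D i) (S T : Finset V) :
    fS G D (S ∪ T) + fS G D (S ∩ T) ≤ fS G D S + fS G D T := by
  have hU : nbrs G (S ∪ T) = nbrs G S ∪ nbrs G T := by
    ext a
    simp only [nbrs, Finset.mem_biUnion, Finset.mem_union]
    constructor
    · rintro ⟨i, (hi | hi), hai⟩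
      exacts [Or.inl ⟨i, hi, hai⟩, Or.inr ⟨i, hi, hai⟩]
    · rintro (⟨i, hi, hai⟩ | ⟨i, hi, hai⟩)
      exacts [⟨i, Or.inl hi, hai⟩, ⟨i, Or.inr hi, hai⟩]
  have hI : nbrs G (S ∩ T) ⊆ nbrs G S ∩ nbrs G T := by
    intro a ha
    rcases Finset.mem_biUnion.mp ha with ⟨i, hi, hai⟩
    rcases Finset.mem_inter.mp hi with ⟨hiS, hiT⟩
    exact Finset.mem_inter.mpr ⟨Finset.mem_biUnion.mpr ⟨i, hiS, hai⟩,
      Finset.mem_biUnion.mpr ⟨i, hiT, hai⟩⟩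
  have h1 : fS G D (S ∩ T) ≤ ∑ j ∈ nbrs G S ∩ nbrs G T, D j :=
    Finset.sum_le_sum_of_subset_of_nonneg hI (fun j _ _ => hD j)
  have h2 : ∑ j ∈ nbrs G S ∪ nbrs G T, D j + ∑ j ∈ nbrs G S ∩ nbrs G T, D j
      = fS G D S + fS G D T := Finset.sum_union_inter
  have h3 : fS G D (S ∪ T) = ∑ j ∈ nbrs G S ∪ nbrs G T, D j := by rw [fS, hU]
  linarith

variable {G D}

lemma tight_union_inter (hD : ∀ i, 0 ≤ D i) {rstar : V → ℝ}
    (hr : rstar ∈ polyA (fS G D)) {S T : Finset V}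
    (hS : ∑ k ∈ S, rstar k = fS G D S) (hT : ∑ k ∈ T, rstar k = fS G D T) :
    (∑ k ∈ S ∪ T, rstar k = fS G D (S ∪ T)) ∧ (∑ k ∈ S ∩ T, rstar k = fS G D (S ∩ T)) := by
  have h1 := hr.2 (S ∪ T)
  have h2 := hr.2 (S ∩ T)
  have h3 := fS_submodular G D hD S T
  have h4 : ∑ k ∈ S ∪ T, rstar k + ∑ k ∈ S ∩ T, rstar k
      = ∑ k ∈ S, rstar k + ∑ k ∈ T, rstar k := Finset.sum_union_inter
  constructor <;> linarith

lemma tight_sup (hD : ∀ i, 0 ≤ D i) {rstar : V → ℝ}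
    (hr : rstar ∈ polyA (fS G D)) {β : Type*} (s : Finset β) (f : β → Finset V)
    (hf : ∀ b ∈ s, ∑ k ∈ f b, rstar k = fS G D (f b)) :
    ∑ k ∈ s.sup f, rstar k = fS G D (s.sup f) := by
  refine Finset.sup_induction (p := fun S : Finset V => ∑ k ∈ S, rstar k = fS G D S) ?_ ?_ hf
  · show ∑ k ∈ (∅ : Finset V), rstar k = fS G D ∅
    rw [fS_empty]; simp
  · intro S hS T hT
    exact (tight_union_inter hD hr hS hT).1

lemma tight_inf (hD : ∀ i, 0 ≤ D i) {rstar : V → ℝ}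
    (hr : rstar ∈ polyA (fS G D)) (huniv : ∑ k, rstar k = fS G D univ)
    {β : Type*} (s : Finset β) (f : β → Finset V)
    (hf : ∀ b ∈ s, ∑ k ∈ f b, rstar k = fS G D (f b)) :
    ∑ k ∈ s.inf f, rstar k = fS G D (s.inf f) := by
  refine Finset.inf_induction (p := fun S : Finset V => ∑ k ∈ S, rstar k = fS G D S) ?_ ?_ hf
  · show ∑ k ∈ (univ : Finset V), rstar k = fS G D univ
    exact huniv
  · intro S hS T hT
    exact (tight_union_inter hD hr hS hT).2

/-- Fact A: a lex-optimal point is a base. -/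
lemma lexopt_univ_tight (hD : ∀ i, 0 < D i) {rstar : V → ℝ}
    (hlex : LexOptimal (polyA (fS G D)) D rstar) :
    ∑ k, rstar k = fS G D univ := by
  by_contra hne
  have hle : ∑ k, rstar k ≤ fS G D univ := hlex.1.2 univ
  have hlt : ∑ k, rstar k < fS G D univ := lt_of_le_of_ne hle hne
  -- union of all tight sets
  set U : Finset V := ((univ : Finset (Finset V)).filter
      (fun S => ∑ k ∈ S, rstar k = fS G D S)).sup id with hU
  have hUtight : ∑ k ∈ U, rstar k = fS G D U := by
    refine tight_sup (fun i => (hD i).le) hlex.1 _ id (fun S hS => ?_)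
    exact (Finset.mem_filter.mp hS).2
  have hUne : U ≠ univ := by
    intro h
    rw [h] at hUtight
    exact hne hUtight
  obtain ⟨i, hiU⟩ : ∃ i, i ∉ U := by
    by_contra h
    push_neg at h
    exact hUne (Finset.eq_univ_iff_forall.mpr h)
  have hslack : ∀ S : Finset V, i ∈ S → ∑ k ∈ S, rstar k < fS G D S := by
    intro S hiS
    refine lt_of_le_of_ne (hlex.1.2 S) (fun htight => hiU ?_)
    have : S ∈ (univ : Finset (Finset V)).filter
        (fun S => ∑ k ∈ S, rstar k = fS G D S) :=
      Finset.mem_filter.mpr ⟨Finset.mem_univ _, htight⟩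
    exact (Finset.le_sup (f := id) this : S ⊆ U) hiS
  set T : Finset ℝ := ((univ : Finset (Finset V)).filter (fun S : Finset V => i ∈ S)).image
    (fun S => fS G D S - ∑ k ∈ S, rstar k) with hT
  have hTne : T.Nonempty := by
    refine ⟨fS G D {i} - ∑ k ∈ {i}, rstar k, Finset.mem_image.mpr ⟨{i}, ?_, rfl⟩⟩
    exact Finset.mem_filter.mpr ⟨Finset.mem_univ _, Finset.mem_singleton_self i⟩
  set δ := T.min' hTne with hδ
  have hδpos : 0 < δ := by
    rw [hδ, Finset.lt_min'_iff]
    intro y hy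
    rcases Finset.mem_image.mp hy with ⟨S, hS, rfl⟩
    have := hslack S (Finset.mem_filter.mp hS).2
    linarith
  set r' : V → ℝ := fun k => if k = i then rstar k + δ else rstar k with hr'
  have hr'sum : ∀ S : Finset V, ∑ k ∈ S, r' k
      = ∑ k ∈ S, rstar k + (if i ∈ S then δ else 0) := by
    intro S
    have : ∀ k, r' k = rstar k + (if k = i then δ else 0) := by
      intro k
      by_cases hk : k = i <;> simp [hr', hk]
    simp_rw [this]
    rw [Finset.sum_add_distrib, Finset.sum_ite_eq' S i (fun _ => δ)]
  have hr'A : r' ∈ polyA (fS G D) := by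
    constructor
    · intro k
      by_cases hk : k = i <;> simp [hr', hk] <;> [linarith [hlex.1.1 i]; exact hlex.1.1 k]
    · intro S
      rw [hr'sum S]
      by_cases hiS : i ∈ S
      · simp only [hiS, if_true]
        have hδS : δ ≤ fS G D S - ∑ k ∈ S, rstar k := by
          refine Finset.min'_le _ _ (Finset.mem_image.mpr ⟨S, ?_, rfl⟩)
          exact Finset.mem_filter.mpr ⟨Finset.mem_univ _, hiS⟩
        linarith
      · simp only [hiS, if_false]
        linarith [hlex.1.2 S]
  have hGE := hlex.2 r' hr'A
  refine notLexGE_of_counts (fun k => rstar k / D k) (fun k => r' k / D k)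
    (rstar i / D i) ?_ ?_ hGE
  · intro c hc
    congr 1
    ext k
    simp only [Finset.mem_filter, Finset.mem_univ, true_and]
    by_cases hk : k = i
    · subst hk
      have h1 : ¬ (rstar k / D k ≤ c) := by linarith
      have h2 : ¬ (r' k / D k ≤ c) := by
        have hle2 : rstar k / D k ≤ r' k / D k := by
          simp only [hr', if_pos rfl, if_true]
          have hDk := hD k
          rw [div_le_div_iff₀ hDk hDk]
          nlinarith
        linarith
      simp [h1, h2]
    · simp [hr', hk]
  · refine Finset.card_lt_card ?_
    rw [Finset.ssubset_iff_of_subset ?_]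
    · refine ⟨i, ?_, ?_⟩
      · simp
      · simp only [Finset.mem_filter, Finset.mem_univ, true_and, hr', if_pos rfl]
        intro hcon
        have hDi := hD i
        simp only [if_true] at hcon
        rw [div_le_div_iff₀ hDi hDi] at hcon
        nlinarith
    · intro k hk
      simp only [Finset.mem_filter, Finset.mem_univ, true_and] at hk ⊢
      by_cases hki : k = i
      · subst hki
        exfalso
        simp only [hr', if_pos rfl, if_true] at hk
        have hDi := hD k
        rw [div_le_div_iff₀ hDi hDi] at hk
        nlinarith
      · simpa [hr', hki] using hk

end Poly

section Exch

variable {V : Type*} [Fintype V] [DecidableEq V]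
variable {G : SimpleGraph V} [DecidableRel G.Adj] {D : V → ℝ}

/-- Exchange lemma: if `ρ*_i < ρ*_j` then some tight set contains `i` and not `j`. -/
lemma lexopt_exchange (hD : ∀ i, 0 < D i) {rstar : V → ℝ}
    (hlex : LexOptimal (polyA (fS G D)) D rstar) {i j : V}
    (hij : rstar i / D i < rstar j / D j) :
    ∃ S : Finset V, i ∈ S ∧ j ∉ S ∧ ∑ k ∈ S, rstar k = fS G D S := by
  by_contra hcon
  push_neg at hcon
  have hinej : i ≠ j := by rintro rfl; exact lt_irrefl _ hij
  have hslack : ∀ S : Finset V, i ∈ S → j ∉ S → ∑ k ∈ S, rstar k < fS G D S := by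
    intro S hiS hjS
    exact lt_of_le_of_ne (hlex.1.2 S) (hcon S hiS hjS)
  set T : Finset ℝ := ((univ : Finset (Finset V)).filter
      (fun S : Finset V => i ∈ S ∧ j ∉ S)).image
      (fun S => fS G D S - ∑ k ∈ S, rstar k) with hT
  have hTne : T.Nonempty := by
    refine ⟨fS G D {i} - ∑ k ∈ {i}, rstar k, Finset.mem_image.mpr ⟨{i}, ?_, rfl⟩⟩
    refine Finset.mem_filter.mpr ⟨Finset.mem_univ _, Finset.mem_singleton_self i, ?_⟩
    simp [Finset.mem_singleton]
    exact fun h => hinej h.symm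
  set δ₀ := T.min' hTne with hδ₀
  have hδ₀pos : 0 < δ₀ := by
    rw [hδ₀, Finset.lt_min'_iff]
    intro y hy
    rcases Finset.mem_image.mp hy with ⟨S, hS, rfl⟩
    rcases Finset.mem_filter.mp hS with ⟨_, hiS, hjS⟩
    linarith [hslack S hiS hjS]
  set δ₁ : ℝ := (rstar j / D j - rstar i / D i) * D j / 2 with hδ₁
  have hδ₁pos : 0 < δ₁ := by
    rw [hδ₁]
    exact div_pos (mul_pos (by linarith) (hD j)) two_pos
  set δ := min δ₀ δ₁ with hδ
  have hδpos : 0 < δ := lt_min hδ₀pos hδ₁pos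
  have hρi : 0 ≤ rstar i / D i := div_nonneg (hlex.1.1 i) (hD i).le
  -- the perturbed ratio at j stays strictly above ρ*_i
  have hρj' : rstar i / D i < (rstar j - δ) / D j := by
    have hDj := hD j
    rw [lt_div_iff₀ hDj]
    have hδle : δ ≤ δ₁ := min_le_right _ _
    have h1 : rstar i / D i * D j < rstar j - δ₁ := by
      rw [hδ₁]
      have h2 : rstar j / D j * D j = rstar j := by field_simp
      nlinarith [hij]
    linarith
  have hjnn : 0 ≤ rstar j - δ := by
    have := hρj'
    have hDj := hD j
    nlinarith [hρi, (lt_div_iff₀ hDj).mp hρj']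
  set r' : V → ℝ := fun k => if k = i then rstar k + δ else if k = j then rstar k - δ else rstar k
    with hr'
  have hr'i : r' i = rstar i + δ := by simp [hr']
  have hr'j : r' j = rstar j - δ := by simp [hr', hinej.symm]
  have hr'k : ∀ k, k ≠ i → k ≠ j → r' k = rstar k := by
    intro k h1 h2; simp [hr', h1, h2]
  have hr'sum : ∀ S : Finset V, ∑ k ∈ S, r' k
      = ∑ k ∈ S, rstar k + (if i ∈ S then δ else 0) - (if j ∈ S then δ else 0) := by
    intro S
    have hptw : ∀ k, r' k = rstar k + (if k = i then δ else 0) - (if k = j then δ else 0) := by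
      intro k
      by_cases h1 : k = i
      · subst h1; simp [hr'i, hinej]
      · by_cases h2 : k = j
        · subst h2; simp [hr'j, h1]
        · simp [hr'k k h1 h2, h1, h2]
    simp_rw [hptw]
    rw [Finset.sum_sub_distrib, Finset.sum_add_distrib,
      Finset.sum_ite_eq' S i (fun _ => δ), Finset.sum_ite_eq' S j (fun _ => δ)]
  have hr'A : r' ∈ polyA (fS G D) := by
    constructor
    · intro k
      by_cases h1 : k = i
      · subst h1; rw [hr'i]; linarith [hlex.1.1 k]
      · by_cases h2 : k = j
        · subst h2; rw [hr'j]; linarith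
        · rw [hr'k k h1 h2]; exact hlex.1.1 k
    · intro S
      rw [hr'sum S]
      by_cases hiS : i ∈ S
      · by_cases hjS : j ∈ S
        · simp only [hiS, hjS, if_true]
          linarith [hlex.1.2 S]
        · simp only [hiS, hjS, if_true, if_false]
          have hδS : δ ≤ fS G D S - ∑ k ∈ S, rstar k := by
            refine le_trans (min_le_left _ _) ?_
            refine Finset.min'_le _ _ (Finset.mem_image.mpr ⟨S, ?_, rfl⟩)
            exact Finset.mem_filter.mpr ⟨Finset.mem_univ _, hiS, hjS⟩
          linarith
      · simp only [hiS, if_false]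
        have : (if j ∈ S then δ else 0) ≥ 0 := by
          by_cases hjS : j ∈ S <;> simp [hjS] <;> linarith
        linarith [hlex.1.2 S]
  have hGE := hlex.2 r' hr'A
  refine notLexGE_of_counts (fun k => rstar k / D k) (fun k => r' k / D k)
    (rstar i / D i) ?_ ?_ hGE
  · intro c hc
    congr 1
    ext k
    simp only [Finset.mem_filter, Finset.mem_univ, true_and]
    by_cases h1 : k = i
    · subst h1
      have ha : ¬ (rstar k / D k ≤ c) := by linarith
      have hb : ¬ (r' k / D k ≤ c) := by
        rw [hr'i]
        have hDk := hD k
        have : rstar k / D k ≤ (rstar k + δ) / D k := by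
          rw [div_le_div_iff₀ hDk hDk]; nlinarith
        linarith
      simp [ha, hb]
    · by_cases h2 : k = j
      · subst h2
        have ha : ¬ (rstar k / D k ≤ c) := by
          have : rstar i / D i < rstar k / D k := hij
          linarith
        have hb : ¬ (r' k / D k ≤ c) := by
          rw [hr'j]; linarith
        simp [ha, hb]
      · rw [hr'k k h1 h2]
  · refine Finset.card_lt_card ?_
    rw [Finset.ssubset_iff_of_subset ?_]
    · refine ⟨i, by simp, ?_⟩
      simp only [Finset.mem_filter, Finset.mem_univ, true_and, hr'i]
      intro hcontra
      have hDi := hD i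
      rw [div_le_div_iff₀ hDi hDi] at hcontra
      nlinarith
    · intro k hk
      simp only [Finset.mem_filter, Finset.mem_univ, true_and] at hk ⊢
      by_cases h1 : k = i
      · exfalso
        subst h1
        rw [hr'i] at hk
        have hDk := hD k
        rw [div_le_div_iff₀ hDk hDk] at hk
        nlinarith
      · by_cases h2 : k = j
        · exfalso
          subst h2
          rw [hr'j] at hk
          linarith
        · rwa [hr'k k h1 h2] at hk

end Exch

section Pref

variable {V : Type*} [Fintype V] [DecidableEq V]
variable {G : SimpleGraph V} [DecidableRel G.Adj] {D : V → ℝ}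

/-- Prefix tightness: every lower level set of a lex-optimal point is tight. -/
lemma lexopt_prefix_tight (hD : ∀ i, 0 < D i) {rstar : V → ℝ}
    (hlex : LexOptimal (polyA (fS G D)) D rstar) (c : ℝ) :
    ∑ k ∈ univ.filter (fun i => rstar i / D i ≤ c), rstar k
      = fS G D (univ.filter (fun i => rstar i / D i ≤ c)) := by
  set P := univ.filter (fun i => rstar i / D i ≤ c) with hP
  have huniv := lexopt_univ_tight hD hlex
  by_cases hPU : P = univ
  · rw [hPU]; exact huniv
  -- for each j ∉ P, build a tight set containing P and avoiding j
  have hAj : ∀ j ∈ univ \ P, ∃ Aj : Finset V,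
      (∑ k ∈ Aj, rstar k = fS G D Aj) ∧ P ⊆ Aj ∧ j ∉ Aj := by
    intro j hj
    rw [Finset.mem_sdiff, hP, Finset.mem_filter] at hj
    have hjc : ¬ (rstar j / D j ≤ c) := fun h => hj.2 ⟨Finset.mem_univ _, h⟩
    push_neg at hjc
    have hS : ∀ i ∈ P, ∃ S : Finset V, i ∈ S ∧ j ∉ S ∧ ∑ k ∈ S, rstar k = fS G D S := by
      intro i hi
      rw [hP, Finset.mem_filter] at hi
      exact lexopt_exchange hD hlex (lt_of_le_of_lt hi.2 hjc)
    set Aj := P.attach.sup (fun i => Classical.choose (hS i.1 i.2)) with hAjdef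
    refine ⟨Aj, ?_, ?_, ?_⟩
    · refine tight_sup (fun i => (hD i).le) hlex.1 _ _ (fun b _ => ?_)
      exact (Classical.choose_spec (hS b.1 b.2)).2.2
    · intro i hi
      have hmem : i ∈ Classical.choose (hS i hi) := (Classical.choose_spec (hS i hi)).1
      exact Finset.mem_sup.mpr ⟨⟨i, hi⟩, Finset.mem_attach _ _, hmem⟩
    · intro hjA
      rcases Finset.mem_sup.mp hjA with ⟨⟨i, hi⟩, _, hmem⟩
      exact (Classical.choose_spec (hS i hi)).2.1 hmem
  -- intersect them all
  set B := (univ \ P).attach.inf (fun j => Classical.choose (hAj j.1 j.2)) with hBdef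
  have hBtight : ∑ k ∈ B, rstar k = fS G D B := by
    refine tight_inf (fun i => (hD i).le) hlex.1 huniv _ _ (fun b _ => ?_)
    exact (Classical.choose_spec (hAj b.1 b.2)).1
  have hBP : B = P := by
    apply Finset.Subset.antisymm
    · intro k hk
      by_contra hkP
      have hkmem : k ∈ univ \ P := Finset.mem_sdiff.mpr ⟨Finset.mem_univ _, hkP⟩
      have := Finset.mem_inf.mp hk ⟨k, hkmem⟩ (Finset.mem_attach _ _)
      exact (Classical.choose_spec (hAj k hkmem)).2.2 this
    · intro k hk
      refine Finset.mem_inf.mpr (fun j _ => ?_)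
      exact (Classical.choose_spec (hAj j.1 j.2)).2.1 hk
  rw [← hBP]
  exact hBtight

end Pref

section Lvl

variable {V : Type*} [Fintype V] [DecidableEq V]

lemma filter_ratio_eq_biUnion (D r : V → ℝ) (c : ℝ)
    (hne : (univ.filter (fun i => ratio D r i ≤ c)).Nonempty) :
    ∃ n : ℕ, 1 ≤ n ∧ n ≤ numLevels D r ∧
      univ.filter (fun i => ratio D r i ≤ c) = (Finset.Icc 1 n).biUnion (level D r) := by
  set l := vals D r with hl
  have hsort : l.Pairwise (· ≤ ·) := Finset.pairwise_sort _ _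
  have hmem : ∀ i : V, ratio D r i ∈ l := by
    intro i
    rw [hl, vals, Finset.mem_sort]
    exact Finset.mem_image_of_mem _ (Finset.mem_univ i)
  set n := l.countP (fun a => decide (a ≤ c)) with hn
  have hnlen : n ≤ l.length := List.countP_le_length
  have hn1 : 1 ≤ n := by
    obtain ⟨i, hi⟩ := hne
    rw [Finset.mem_filter] at hi
    have : 0 < l.countP (fun a => decide (a ≤ c)) :=
      List.countP_pos_iff.mpr ⟨ratio D r i, hmem i, by simpa using hi.2⟩
    omega
  refine ⟨n, hn1, hnlen, ?_⟩
  ext i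
  simp only [Finset.mem_filter, Finset.mem_univ, true_and, Finset.mem_biUnion, Finset.mem_Icc]
  constructor
  · intro hic
    obtain ⟨k, hk, hkeq⟩ := List.mem_iff_getElem.mp (hmem i)
    have hgetD : l.getD k 0 = ratio D r i := by
      rw [List.getD_eq_getElem l 0 hk, hkeq]
    have hkn : k < n := by
      rw [hn]
      exact (sorted_getD_le_iff l hsort k hk c).mp (by rw [hgetD]; exact hic)
    refine ⟨k + 1, ⟨by omega, by omega⟩, ?_⟩
    rw [level, Finset.mem_filter]
    refine ⟨Finset.mem_univ _, ?_⟩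
    rw [v, ← hl]
    simp only [Nat.add_sub_cancel]
    rw [hgetD]
  · rintro ⟨m, ⟨hm1, hmn⟩, hlev⟩
    rw [level, Finset.mem_filter] at hlev
    have hmlt : m - 1 < l.length := by omega
    have : l.getD (m - 1) 0 ≤ c := by
      rw [sorted_getD_le_iff l hsort (m - 1) hmlt c]
      omega
    rw [hlev.2, v, ← hl]
    exact this

end Lvl

/-- drift positivity: with `r*` lex-optimal, `r ≥ 0`, and `J ∈ A₀` satisfying
the level-set equalities for `r`, the drift satisfies
`Σ_i (1/D_i)(r*_i − r_i)(J_i − r_i) ≥ Σ_i (1/D_i)(r*_i − r_i)²`; in particular if the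
(Euclidean) distance `‖r − r*‖` is at least `ε > 0` then the drift is at least
`ε² · min_i (1/D_i) > 0`. -/
theorem drift_positivity {V : Type*} [Fintype V] [DecidableEq V] [Nonempty V]
    (G : SimpleGraph V) [DecidableRel G.Adj]
    (hconn : G.Connected) (hniso : ∀ i, (G.neighborFinset i).Nonempty)
    (D : V → ℝ) (hD : ∀ i, 0 < D i)
    (rstar : V → ℝ) (hlex : LexOptimal (polyA (fS G D)) D rstar)
    (r : V → ℝ) (hrpos : ∀ i, 0 ≤ r i)
    (J : V → ℝ) (hJbase : J ∈ polyBase (fS G D))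
    (hJ : ∀ n : ℕ, 1 ≤ n → n ≤ numLevels D r →
      ∑ i ∈ (Finset.Icc 1 n).biUnion (level D r), J i =
        fS G D ((Finset.Icc 1 n).biUnion (level D r))) :
    (∑ i, (1 / D i) * (rstar i - r i) ^ 2 ≤
        ∑ i, (1 / D i) * (rstar i - r i) * (J i - r i)) ∧
    ∀ ε : ℝ, 0 < ε → ε ≤ Real.sqrt (∑ i, (r i - rstar i) ^ 2) →
      (ε ^ 2 * (Finset.univ.inf' Finset.univ_nonempty fun i => 1 / D i) ≤
          ∑ i, (1 / D i) * (rstar i - r i) * (J i - r i)) ∧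
        0 < ε ^ 2 * (Finset.univ.inf' Finset.univ_nonempty fun i => 1 / D i) := by
  have hA := hlex.1
  have huniv : ∑ k, rstar k = fS G D univ := lexopt_univ_tight hD hlex
  have key1 : 0 ≤ ∑ i, (rstar i / D i) * (J i - rstar i) := by
    refine abel _ _ ?_ ?_
    · intro c
      have h1 : ∑ k ∈ univ.filter (fun i => rstar i / D i ≤ c), J k
          ≤ fS G D (univ.filter (fun i => rstar i / D i ≤ c)) :=
        hJbase.1.2 _
      have h2 := lexopt_prefix_tight hD hlex c
      rw [Finset.sum_sub_distrib]
      linarith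
    · rw [Finset.sum_sub_distrib, hJbase.2, huniv, sub_self]
  have key2 : 0 ≤ ∑ i, (ratio D r i) * (rstar i - J i) := by
    refine abel _ _ ?_ ?_
    · intro c
      rcases (univ.filter (fun i => ratio D r i ≤ c)).eq_empty_or_nonempty with hPe | hPne
      · rw [hPe]
        simp
      · obtain ⟨n, hn1, hn2, hPeq⟩ := filter_ratio_eq_biUnion D r c hPne
        have hJeq : ∑ k ∈ univ.filter (fun i => ratio D r i ≤ c), J k
            = fS G D (univ.filter (fun i => ratio D r i ≤ c)) := by
          rw [hPeq]
          exact hJ n hn1 hn2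
        have hre : ∑ k ∈ univ.filter (fun i => ratio D r i ≤ c), rstar k
            ≤ fS G D (univ.filter (fun i => ratio D r i ≤ c)) := hA.2 _
        rw [Finset.sum_sub_distrib]
        linarith
    · rw [Finset.sum_sub_distrib, huniv, hJbase.2, sub_self]
  have main : ∑ i, (1 / D i) * (rstar i - r i) ^ 2
      ≤ ∑ i, (1 / D i) * (rstar i - r i) * (J i - r i) := by
    have hpt : ∀ i, (1 / D i) * (rstar i - r i) * (J i - r i)
          - (1 / D i) * (rstar i - r i) ^ 2
        = (rstar i / D i) * (J i - rstar i) + (ratio D r i) * (rstar i - J i) := by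
      intro i
      have hDi := (hD i).ne'
      rw [ratio]
      field_simp
      ring
    have hsum : ∑ i, ((1 / D i) * (rstar i - r i) * (J i - r i)
          - (1 / D i) * (rstar i - r i) ^ 2)
        = ∑ i, (rstar i / D i) * (J i - rstar i) + ∑ i, (ratio D r i) * (rstar i - J i) := by
      rw [← Finset.sum_add_distrib]
      exact Finset.sum_congr rfl (fun i _ => hpt i)
    rw [Finset.sum_sub_distrib] at hsum
    linarith
  refine ⟨main, ?_⟩
  intro ε hε hεle
  have hsumsq : (0:ℝ) ≤ ∑ i, (r i - rstar i) ^ 2 := by positivity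
  have hε2 : ε ^ 2 ≤ ∑ i, (r i - rstar i) ^ 2 := (Real.le_sqrt hε.le hsumsq).mp hεle
  have hmpos : 0 < (Finset.univ.inf' Finset.univ_nonempty fun i => 1 / D i) := by
    rw [Finset.lt_inf'_iff]
    intro i _
    exact one_div_pos.mpr (hD i)
  have hstep : ε ^ 2 * (Finset.univ.inf' Finset.univ_nonempty fun i => 1 / D i)
      ≤ ∑ i, (1 / D i) * (rstar i - r i) ^ 2 := by
    set m := Finset.univ.inf' Finset.univ_nonempty fun i => 1 / D i with hm
    have h1 : ∀ i ∈ (univ : Finset V), m * (r i - rstar i) ^ 2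
        ≤ (1 / D i) * (rstar i - r i) ^ 2 := by
      intro i _
      have hmle : m ≤ 1 / D i := Finset.inf'_le _ (Finset.mem_univ i)
      have hsq : (rstar i - r i) ^ 2 = (r i - rstar i) ^ 2 := by ring
      rw [hsq]
      exact mul_le_mul_of_nonneg_right hmle (by positivity)
    calc ε ^ 2 * m = m * ε ^ 2 := by ring
    _ ≤ m * ∑ i, (r i - rstar i) ^ 2 := mul_le_mul_of_nonneg_left hε2 hmpos.le
    _ = ∑ i, m * (r i - rstar i) ^ 2 := by rw [Finset.mul_sum]
    _ ≤ ∑ i, (1 / D i) * (rstar i - r i) ^ 2 := Finset.sum_le_sum h1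
  exact ⟨le_trans hstep main, mul_pos (pow_pos hε 2) hmpos⟩

end SharingEcon
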